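/- With U(m,j) = C(m-j,j)·2^j and C_t = C(2t,t)·2^t, define B_t = Σ_{j=0}^{t-1} U(3t-1, j) − Σ_{j≥t+1} U(3t-1, j) and D_t = Σ_{j=0}^{t-1} U(3t, j) − Σ_{j≥t+1} U(3t, j). Then B_t = C_t/2 − D_t for every t ≥ 1, and consequently 0 < B_t < C_t/2. -/

import Mathlib

def U (m j : ℕ) : ℕ := Nat.choose (m - j) j * 2 ^ j

def C (t : ℕ) : ℕ := Nat.choose (2 * t) t * 2 ^ t

def B (t : ℕ) : ℤ :=
  (∑ j ∈ Finset.range t, U (3 * t - 1) j : ℤ)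
    - ∑ j ∈ Finset.Icc (t + 1) (3 * t), (U (3 * t - 1) j : ℤ)

def D (t : ℕ) : ℤ :=
  (∑ j ∈ Finset.range t, U (3 * t) j : ℤ)
    - ∑ j ∈ Finset.Icc (t + 1) (3 * t), (U (3 * t) j : ℤ)

def T (m k : ℕ) : ℕ := ∑ j ∈ Finset.range k, U m j

def V (m : ℕ) : ℕ := T m (m + 1)

lemma U_zero (m : ℕ) : U m 0 = 1 := by simp [U]

lemma U_eq_zero {m j : ℕ} (h : m < 2 * j) : U m j = 0 := by
  have : m - j < j := by omega
  simp [U, Nat.choose_eq_zero_of_lt this]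

lemma U_rec (m j : ℕ) : U (m + 2) (j + 1) = U (m + 1) (j + 1) + 2 * U m j := by
  rcases le_or_gt j m with h | h
  · have h1 : m + 2 - (j + 1) = (m - j) + 1 := by omega
    have h2 : m + 1 - (j + 1) = m - j := by omega
    rw [U, U, U, h1, h2, Nat.choose_succ_succ]
    ring
  · rw [U_eq_zero (by omega), U_eq_zero (by omega), U_eq_zero (by omega)]

lemma T_rec (m k : ℕ) : T (m + 2) (k + 1) = T (m + 1) (k + 1) + 2 * T m k := by
  induction k with
  | zero => simp [T, U_zero]
  | succ k ih =>
      have hu := U_rec m k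
      simp only [T, Finset.sum_range_succ] at ih ⊢
      omega

lemma T_stab (m : ℕ) : ∀ n, m + 1 ≤ n → T m n = T m (m + 1) := by
  intro n hn
  induction n with
  | zero => omega
  | succ n ih =>
      rcases Nat.lt_or_ge n (m + 1) with h | h
      · have : n + 1 = m + 1 := by omega
        rw [this]
      · rw [T, Finset.sum_range_succ, ← T, ih h, U_eq_zero (by omega)]
        omega

lemma V_rec (m : ℕ) : V (m + 2) = V (m + 1) + 2 * V m := by
  have h := T_rec m (m + 2)
  rw [T_stab (m + 1) (m + 3) (by omega), T_stab m (m + 2) (by omega)] at h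
  exact h

lemma V_pair (m : ℕ) : V m + V (m + 1) = 2 ^ (m + 1) := by
  induction m with
  | zero => norm_num [V, T, U, Finset.sum_range_succ]
  | succ m ih =>
      rw [V_rec]
      omega

lemma U_central (s : ℕ) :
    U (3 * s + 6) (s + 2) = 4 * U (3 * s + 3) (s + 1) + 8 * U (3 * s + 2) s := by
  rw [U, U, U]
  have h1 : 3 * s + 6 - (s + 2) = 2 * s + 4 := by omega
  have h2 : 3 * s + 3 - (s + 1) = 2 * s + 2 := by omega
  have h3 : 3 * s + 2 - s = 2 * s + 2 := by omega
  rw [h1, h2, h3]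
  have p1 : Nat.choose (2 * s + 4) (s + 2)
      = Nat.choose (2 * s + 3) (s + 1) + Nat.choose (2 * s + 3) (s + 2) :=
    Nat.choose_succ_succ (2 * s + 3) (s + 1)
  have p2 : Nat.choose (2 * s + 3) (s + 2) = Nat.choose (2 * s + 3) (s + 1) := by
    have := Nat.choose_symm (n := 2 * s + 3) (k := s + 1) (by omega)
    have e : 2 * s + 3 - (s + 1) = s + 2 := by omega
    rw [e] at this
    exact this
  have p3 : Nat.choose (2 * s + 3) (s + 1)
      = Nat.choose (2 * s + 2) s + Nat.choose (2 * s + 2) (s + 1) :=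
    Nat.choose_succ_succ (2 * s + 2) s
  rw [p1, p2, p3]
  ring

lemma U_double (s : ℕ) : U (3 * s + 3) (s + 1) = 2 * U (3 * s + 2) (s + 1) := by
  rw [U, U]
  have h2 : 3 * s + 3 - (s + 1) = 2 * s + 2 := by omega
  have h3 : 3 * s + 2 - (s + 1) = 2 * s + 1 := by omega
  rw [h2, h3]
  have p1 : Nat.choose (2 * s + 2) (s + 1)
      = Nat.choose (2 * s + 1) s + Nat.choose (2 * s + 1) (s + 1) :=
    Nat.choose_succ_succ (2 * s + 1) s
  have p2 : Nat.choose (2 * s + 1) s = Nat.choose (2 * s + 1) (s + 1) := by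
    have := Nat.choose_symm (n := 2 * s + 1) (k := s + 1) (by omega)
    have e : 2 * s + 1 - (s + 1) = s := by omega
    rw [e] at this
    exact this
  rw [p1, p2]
  ring

lemma Qkey : ∀ s : ℕ,
    2 * T (3 * s + 2) (s + 1) + 2 * T (3 * s + 3) (s + 1) + U (3 * s + 3) (s + 1)
      = 8 ^ (s + 1) := by
  intro s
  induction s with
  | zero => norm_num [T, U, Finset.sum_range_succ]
  | succ s ih =>
      have e0a : 3 * (s + 1) + 2 = 3 * s + 5 := by omega
      have e0b : 3 * (s + 1) + 3 = 3 * s + 6 := by omega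
      have e0c : s + 1 + 1 = s + 2 := rfl
      rw [e0a, e0b, e0c]
      have e1 : T (3 * s + 6) (s + 2) = T (3 * s + 5) (s + 2) + 2 * T (3 * s + 4) (s + 1) :=
        T_rec (3 * s + 4) (s + 1)
      have e2 : T (3 * s + 5) (s + 2) = T (3 * s + 4) (s + 2) + 2 * T (3 * s + 3) (s + 1) :=
        T_rec (3 * s + 3) (s + 1)
      have e3 : T (3 * s + 4) (s + 2) = T (3 * s + 3) (s + 2) + 2 * T (3 * s + 2) (s + 1) :=
        T_rec (3 * s + 2) (s + 1)
      have e4 : T (3 * s + 3) (s + 2) = T (3 * s + 3) (s + 1) + U (3 * s + 3) (s + 1) :=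
        Finset.sum_range_succ _ _
      have e5 : T (3 * s + 4) (s + 1) = T (3 * s + 3) (s + 1) + 2 * T (3 * s + 2) s :=
        T_rec (3 * s + 2) s
      have e6 : T (3 * s + 2) (s + 1) = T (3 * s + 2) s + U (3 * s + 2) s :=
        Finset.sum_range_succ _ _
      have e7 := U_central s
      have e8 : (8 : ℕ) ^ (s + 1 + 1) = 8 * 8 ^ (s + 1) := by ring
      rw [e0c] at e8
      omega

lemma B_rep (s : ℕ) :
    B (s + 1) = 2 * (T (3 * s + 2) (s + 1) : ℤ) + (U (3 * s + 2) (s + 1) : ℤ)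
      - (V (3 * s + 2) : ℤ) := by
  have em : 3 * (s + 1) - 1 = 3 * s + 2 := by omega
  have etail : T (3 * s + 2) (s + 2) + (∑ j ∈ Finset.Icc (s + 2) (3 * s + 3), U (3 * s + 2) j)
      = V (3 * s + 2) := by
    rw [← Finset.Ico_add_one_right_eq_Icc]
    have : (∑ j ∈ Finset.Ico 0 (s + 2), U (3 * s + 2) j)
        + ∑ j ∈ Finset.Ico (s + 2) (3 * s + 4), U (3 * s + 2) j
        = ∑ j ∈ Finset.Ico 0 (3 * s + 4), U (3 * s + 2) j :=
      Finset.sum_Ico_consecutive _ (by omega) (by omega)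
    rw [← Finset.range_eq_Ico, ← Finset.range_eq_Ico] at this
    rw [show 3 * s + 3 + 1 = 3 * s + 4 from rfl]
    rw [T, this, ← T, T_stab _ _ (by omega), V]
  have ehead : T (3 * s + 2) (s + 2) = T (3 * s + 2) (s + 1) + U (3 * s + 2) (s + 1) :=
    Finset.sum_range_succ _ _
  rw [B, em, show 3 * (s + 1) = 3 * s + 3 from by omega, show s + 1 + 1 = s + 2 from rfl]
  have : (∑ j ∈ Finset.Icc (s + 2) (3 * s + 3), (U (3 * s + 2) j : ℤ))
      = (V (3 * s + 2) : ℤ) - (T (3 * s + 2) (s + 2) : ℤ) := by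
    push_cast [← etail]
    ring
  rw [this]
  have hhead : (∑ j ∈ Finset.range (s + 1), (U (3 * s + 2) j : ℤ))
      = ((T (3 * s + 2) (s + 1) : ℕ) : ℤ) := by
    rw [T]; push_cast; rfl
  rw [hhead]
  push_cast [ehead]
  ring

lemma D_rep (s : ℕ) :
    D (s + 1) = 2 * (T (3 * s + 3) (s + 1) : ℤ) + (U (3 * s + 3) (s + 1) : ℤ)
      - (V (3 * s + 3) : ℤ) := by
  have etail : T (3 * s + 3) (s + 2) + (∑ j ∈ Finset.Icc (s + 2) (3 * s + 3), U (3 * s + 3) j)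
      = V (3 * s + 3) := by
    rw [← Finset.Ico_add_one_right_eq_Icc]
    have : (∑ j ∈ Finset.Ico 0 (s + 2), U (3 * s + 3) j)
        + ∑ j ∈ Finset.Ico (s + 2) (3 * s + 4), U (3 * s + 3) j
        = ∑ j ∈ Finset.Ico 0 (3 * s + 4), U (3 * s + 3) j :=
      Finset.sum_Ico_consecutive _ (by omega) (by omega)
    rw [← Finset.range_eq_Ico, ← Finset.range_eq_Ico] at this
    rw [show 3 * s + 3 + 1 = 3 * s + 4 from rfl]
    rw [T, this, ← T, T_stab _ _ (by omega), V]
  have ehead : T (3 * s + 3) (s + 2) = T (3 * s + 3) (s + 1) + U (3 * s + 3) (s + 1) :=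
    Finset.sum_range_succ _ _
  rw [D, show 3 * (s + 1) = 3 * s + 3 from by omega, show s + 1 + 1 = s + 2 from rfl]
  have : (∑ j ∈ Finset.Icc (s + 2) (3 * s + 3), (U (3 * s + 3) j : ℤ))
      = (V (3 * s + 3) : ℤ) - (T (3 * s + 3) (s + 2) : ℤ) := by
    push_cast [← etail]
    ring
  rw [this]
  have hhead : (∑ j ∈ Finset.range (s + 1), (U (3 * s + 3) j : ℤ))
      = ((T (3 * s + 3) (s + 1) : ℕ) : ℤ) := by
    rw [T]; push_cast; rfl
  rw [hhead]
  push_cast [ehead]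
  ring

lemma BD_sum (s : ℕ) : B (s + 1) + D (s + 1) = (U (3 * s + 2) (s + 1) : ℤ) := by
  rw [B_rep, D_rep]
  have q := Qkey s
  have vp := V_pair (3 * s + 2)
  have e8 : (8 : ℕ) ^ (s + 1) = 2 ^ (3 * s + 2 + 1) := by
    rw [show (8:ℕ) = 2 ^ 3 from rfl, ← pow_mul, show 3 * (s + 1) = 3 * s + 2 + 1 from by ring]
  rw [e8] at q
  have : (2 * T (3 * s + 2) (s + 1) + 2 * T (3 * s + 3) (s + 1) + U (3 * s + 3) (s + 1) : ℤ)
      = ((V (3 * s + 2) : ℤ) + V (3 * s + 3)) := by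
    exact_mod_cast congrArg (fun n : ℕ => (n : ℤ)) (q.trans vp.symm)
  push_cast at this ⊢
  linarith

lemma D_recur (s : ℕ) : D (s + 2) = D (s + 1) + 2 * B (s + 1) := by
  have hD2 : D (s + 2) = 2 * (T (3 * s + 6) (s + 2) : ℤ) + (U (3 * s + 6) (s + 2) : ℤ)
      - (V (3 * s + 6) : ℤ) := by
    have := D_rep (s + 1)
    rw [show 3 * (s + 1) + 3 = 3 * s + 6 from by omega,
      show s + 1 + 1 = s + 2 from rfl] at this
    exact this
  have e1 : T (3 * s + 6) (s + 2) = T (3 * s + 5) (s + 2) + 2 * T (3 * s + 4) (s + 1) :=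
    T_rec (3 * s + 4) (s + 1)
  have e2 : T (3 * s + 5) (s + 2) = T (3 * s + 4) (s + 2) + 2 * T (3 * s + 3) (s + 1) :=
    T_rec (3 * s + 3) (s + 1)
  have e3 : T (3 * s + 4) (s + 2) = T (3 * s + 3) (s + 2) + 2 * T (3 * s + 2) (s + 1) :=
    T_rec (3 * s + 2) (s + 1)
  have e4 : T (3 * s + 3) (s + 2) = T (3 * s + 3) (s + 1) + U (3 * s + 3) (s + 1) :=
    Finset.sum_range_succ _ _
  have e5 : T (3 * s + 4) (s + 1) = T (3 * s + 3) (s + 1) + 2 * T (3 * s + 2) s :=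
    T_rec (3 * s + 2) s
  have e6 : T (3 * s + 2) (s + 1) = T (3 * s + 2) s + U (3 * s + 2) s :=
    Finset.sum_range_succ _ _
  have e7 := U_central s
  have e8 : V (3 * s + 6) = V (3 * s + 5) + 2 * V (3 * s + 4) := V_rec (3 * s + 4)
  have e9 : V (3 * s + 5) = V (3 * s + 4) + 2 * V (3 * s + 3) := V_rec (3 * s + 3)
  have e10 : V (3 * s + 4) = V (3 * s + 3) + 2 * V (3 * s + 2) := V_rec (3 * s + 2)
  have e11 := Qkey s
  have e12 : V (3 * s + 2) + V (3 * s + 3) = 2 ^ (3 * s + 3) := by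
    have h := V_pair (3 * s + 2)
    rw [show 3 * s + 2 + 1 = 3 * s + 3 from rfl] at h
    exact h
  have e13 : (8 : ℕ) ^ (s + 1) = 2 ^ (3 * s + 3) := by
    rw [show (8:ℕ) = 2 ^ 3 from rfl, ← pow_mul, show 3 * (s + 1) = 3 * s + 3 from by ring]
  have e14 := U_double s
  rw [hD2, D_rep, B_rep]
  rw [e13] at e11
  have key : 2 * T (3 * s + 6) (s + 2) + U (3 * s + 6) (s + 2)
      + V (3 * s + 3) + 2 * V (3 * s + 2)
      = V (3 * s + 6) + 2 * T (3 * s + 3) (s + 1) + U (3 * s + 3) (s + 1)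
        + 2 * (2 * T (3 * s + 2) (s + 1) + U (3 * s + 2) (s + 1)) := by
    omega
  have keyz : (2 * T (3 * s + 6) (s + 2) + U (3 * s + 6) (s + 2)
      + V (3 * s + 3) + 2 * V (3 * s + 2) : ℤ)
      = (V (3 * s + 6) + 2 * T (3 * s + 3) (s + 1) + U (3 * s + 3) (s + 1)
        + 2 * (2 * T (3 * s + 2) (s + 1) + U (3 * s + 2) (s + 1)) : ℤ) := by
    exact_mod_cast congrArg (fun n : ℕ => (n : ℤ)) key
  push_cast at keyz ⊢
  linarith

lemma U_growth (s : ℕ) : 2 * U (3 * s + 2) (s + 1) ≤ U (3 * s + 5) (s + 2) := by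
  rw [U, U]
  have h1 : 3 * s + 2 - (s + 1) = 2 * s + 1 := by omega
  have h2 : 3 * s + 5 - (s + 2) = 2 * s + 3 := by omega
  rw [h1, h2]
  have hc : Nat.choose (2 * s + 1) (s + 1) ≤ Nat.choose (2 * s + 3) (s + 2) := by
    have p1 : Nat.choose (2 * s + 3) (s + 2)
        = Nat.choose (2 * s + 2) (s + 1) + Nat.choose (2 * s + 2) (s + 2) :=
      Nat.choose_succ_succ _ _
    have p2 : Nat.choose (2 * s + 2) (s + 1)
        = Nat.choose (2 * s + 1) s + Nat.choose (2 * s + 1) (s + 1) :=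
      Nat.choose_succ_succ _ _
    omega
  calc 2 * (Nat.choose (2 * s + 1) (s + 1) * 2 ^ (s + 1))
      = Nat.choose (2 * s + 1) (s + 1) * 2 ^ (s + 2) := by ring
    _ ≤ Nat.choose (2 * s + 3) (s + 2) * 2 ^ (s + 2) :=
        Nat.mul_le_mul_right _ hc

lemma pos_BD : ∀ s : ℕ, 0 < B (s + 1) ∧ 0 < D (s + 1) := by
  intro s
  induction s with
  | zero =>
      constructor <;> decide
  | succ s ih =>
      obtain ⟨hB, hD⟩ := ih
      have hrec := D_recur s
      have hD2 : 0 < D (s + 2) := by linarith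
      refine ⟨?_, hD2⟩
      have hbd1 := BD_sum s
      have hbd2 := BD_sum (s + 1)
      rw [show 3 * (s + 1) + 2 = 3 * s + 5 from by omega,
        show s + 1 + 1 = s + 2 from rfl] at hbd2
      have hg : (2 * U (3 * s + 2) (s + 1) : ℤ) ≤ (U (3 * s + 5) (s + 2) : ℤ) := by
        exact_mod_cast U_growth s
      -- B(s+2) = U(3s+5)(s+2) - D(s+2); D(s+2) = D(s+1)+2B(s+1) = U(3s+2)(s+1) + B(s+1)
      -- B(s+1) < U(3s+2)(s+1) since D(s+1) > 0
      linarith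

theorem stmt14 (t : ℕ) (ht : 1 ≤ t) :
    (B t : ℚ) = (C t : ℚ) / 2 - (D t : ℚ) ∧
      0 < (B t : ℚ) ∧ (B t : ℚ) < (C t : ℚ) / 2 := by
  obtain ⟨s, rfl⟩ : ∃ s, t = s + 1 := ⟨t - 1, by omega⟩
  have hbd := BD_sum s
  have hC : (C (s + 1) : ℤ) = 2 * (U (3 * s + 2) (s + 1) : ℤ) := by
    have h1 : C (s + 1) = U (3 * s + 3) (s + 1) := by
      rw [C, U, show 3 * s + 3 - (s + 1) = 2 * s + 2 from by omega,
        show 2 * (s + 1) = 2 * s + 2 from by omega]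
    have h2 := U_double s
    exact_mod_cast h1.trans h2
  obtain ⟨hB, hD⟩ := pos_BD s
  have hCeq : (C (s + 1) : ℚ) = 2 * ((B (s + 1) : ℚ) + (D (s + 1) : ℚ)) := by
    have : (C (s + 1) : ℤ) = 2 * (B (s + 1) + D (s + 1)) := by rw [hbd]; exact hC
    exact_mod_cast congrArg (fun z : ℤ => (z : ℚ)) this
  have hBq : (0 : ℚ) < (B (s + 1) : ℤ) := by exact_mod_cast hB
  have hDq : (0 : ℚ) < (D (s + 1) : ℤ) := by exact_mod_cast hD
  refine ⟨by rw [hCeq]; ring, hBq, ?_⟩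
  rw [hCeq]
  linarith
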